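/- Let n be a positive integer, A, y : Fin n → Bool and B : Bool, and identify true with the integer 1 and false with 0. Then the relaxed equivalence formula ((∃ j, A j = true ∧ y j = true) ↔ (B = true ∧ ∃ j, y j = true)) holds if and only if the following integer inequalities all hold: B ≥ A_j − (1 − y_j) for every j ∈ {1,…,n}, and B ≤ ∑_{k∈S} A_k + (1 − y_j) + ∑_{k∉S} y_k for every nonempty subset S ⊆ {1,…,n} and every j ∈ S. Hence the 0/1 points satisfying these n + n·2^{n−1} inequalities are exactly the satisfying assignments of the relaxed clause. -/
import Mathlib


/-- The 0/1 points satisfying the `n + n·2^(n-1)` inequalities of the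
RIFFSAT inequality description are exactly the satisfying assignments of the
relaxed equivalence clause `(⋁_j (A_j ∧ y_j)) ↔ (B ∧ ⋁_j y_j)`, identifying
`true` with `1` and `false` with `0`. -/
theorem riffsat_clause_ip_iff (n : ℕ) (hn : 0 < n)
    (A y : Fin n → Bool) (B : Bool) :
    ((∃ j, A j = true ∧ y j = true) ↔ (B = true ∧ ∃ j, y j = true)) ↔
      ((∀ j, ((A j).toNat : ℤ) - (1 - ((y j).toNat : ℤ)) ≤ (B.toNat : ℤ)) ∧
       (∀ S : Finset (Fin n), S.Nonempty → ∀ j ∈ S,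
         (B.toNat : ℤ) ≤ (∑ k ∈ S, ((A k).toNat : ℤ)) + (1 - ((y j).toNat : ℤ))
           + ∑ k ∈ Sᶜ, ((y k).toNat : ℤ))) := by
  constructor
  · intro h
    constructor
    · intro j
      by_cases hA : A j = true
      · by_cases hy : y j = true
        · have hB : B = true := (h.mp ⟨j, hA, hy⟩).1
          simp [hA, hy, hB]
        · simp only [Bool.not_eq_true] at hy
          simp [hA, hy]
      · simp only [Bool.not_eq_true] at hA
        simp [hA]
        cases y j <;> cases B <;> simp
    · intro S hS j hj
      have hsumA : (0:ℤ) ≤ ∑ k ∈ S, ((A k).toNat : ℤ) :=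
        Finset.sum_nonneg (fun k _ => by positivity)
      have hsumy : (0:ℤ) ≤ ∑ k ∈ Sᶜ, ((y k).toNat : ℤ) :=
        Finset.sum_nonneg (fun k _ => by positivity)
      cases hB : B with
      | false =>
        have hyj : ((y j).toNat : ℤ) ≤ 1 := by cases y j <;> simp
        simp only [Bool.toNat_false, Nat.cast_zero]
        omega
      | true =>
        by_cases hyj : y j = true
        · obtain ⟨k, hAk, hyk⟩ := h.mpr ⟨hB, ⟨j, hyj⟩⟩
          by_cases hkS : k ∈ S
          · have h1 : (1:ℤ) ≤ ∑ k ∈ S, ((A k).toNat : ℤ) := by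
              have := Finset.single_le_sum (f := fun k => ((A k).toNat : ℤ))
                (fun k _ => by positivity) hkS
              simp [hAk] at this
              exact this
            have hyj1 : ((y j).toNat : ℤ) ≤ 1 := by cases y j <;> simp
            simp only [Bool.toNat_true, Nat.cast_one]
            omega
          · have hkSc : k ∈ Sᶜ := Finset.mem_compl.mpr hkS
            have h1 : (1:ℤ) ≤ ∑ k ∈ Sᶜ, ((y k).toNat : ℤ) := by
              have := Finset.single_le_sum (f := fun k => ((y k).toNat : ℤ))
                (fun k _ => by positivity) hkSc
              simp [hyk] at this
              exact this
            have hyj1 : ((y j).toNat : ℤ) ≤ 1 := by cases y j <;> simp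
            simp only [Bool.toNat_true, Nat.cast_one]
            omega
        · simp only [Bool.not_eq_true] at hyj
          simp only [Bool.toNat_true, Nat.cast_one, hyj, Bool.toNat_false, Nat.cast_zero]
          omega
  · rintro ⟨h1, h2⟩
    constructor
    · rintro ⟨j, hA, hy⟩
      have := h1 j
      simp [hA, hy] at this
      refine ⟨?_, ⟨j, hy⟩⟩
      cases hB : B
      · rw [hB] at this; simp at this
      · rfl
    · rintro ⟨hB, j0, hy0⟩
      by_contra hc
      push_neg at hc
      set S := Finset.univ.filter (fun k => y k = true) with hSdef
      have hj0 : j0 ∈ S := by simp [hSdef, hy0]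
      have hS : S.Nonempty := ⟨j0, hj0⟩
      have key := h2 S hS j0 hj0
      have hA0 : ∑ k ∈ S, ((A k).toNat : ℤ) = 0 := Finset.sum_eq_zero (fun k hk => by
        simp only [hSdef, Finset.mem_filter] at hk
        have hAk : A k = false := by
          cases hAkc : A k
          · rfl
          · exact absurd hk.2 (hc k hAkc)
        simp [hAk])
      have hy0' : ∑ k ∈ Sᶜ, ((y k).toNat : ℤ) = 0 := Finset.sum_eq_zero (fun k hk => by
        simp only [hSdef, Finset.mem_compl, Finset.mem_filter, Finset.mem_univ,
          true_and, Bool.not_eq_true] at hk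
        simp [hk])
      rw [hA0, hy0', hB, hy0] at key
      simp at key
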